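/- Let M be a maximum matching of a finite bipartite graph G = (V, F, E) with coarse decomposition (T_I, T_C, T_O). If a vertex x ∈ T_I is an endpoint of an edge of M, then the other endpoint of that edge also lies in T_I; and if a vertex x ∈ T_O is an endpoint of an edge of M, then the other endpoint of that edge also lies in T_O. -/

import Mathlib

variable {F V : Type*} [Fintype F] [Fintype V] [DecidableEq F] [DecidableEq V]

/-- `M` is a matching of the bipartite graph with edge set `E`:
`M ⊆ E` and no two edges of `M` share an endpoint. -/
def IsMatching (E M : Finset (F × V)) : Prop :=
  M ⊆ E ∧ (∀ e ∈ M, ∀ e' ∈ M, e.1 = e'.1 → e = e') ∧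
    ∀ e ∈ M, ∀ e' ∈ M, e.2 = e'.2 → e = e'

/-- `M` is a maximum matching: a matching of greatest cardinality. -/
def IsMaxMatching (E M : Finset (F × V)) : Prop :=
  IsMatching E M ∧ ∀ M' : Finset (F × V), IsMatching E M' → M'.card ≤ M.card

/-- The (symmetric) adjacency relation of the bipartite graph on `F ⊕ V`. -/
def sumAdj (E : Finset (F × V)) : (F ⊕ V) → (F ⊕ V) → Prop
  | Sum.inl f, Sum.inr v => (f, v) ∈ E
  | Sum.inr v, Sum.inl f => (f, v) ∈ E
  | _, _ => False

/-- The pair of consecutive path vertices forms an edge belonging to `M`. -/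
def pairInM (M : Finset (F × V)) : (F ⊕ V) × (F ⊕ V) → Prop
  | (Sum.inl f, Sum.inr v) => (f, v) ∈ M
  | (Sum.inr v, Sum.inl f) => (f, v) ∈ M
  | _ => False

/-- `l` is an `M`-alternating path in the bipartite graph with edge set `E`:
a nonempty sequence of distinct vertices in which consecutive vertices are joined
by edges of `E` lying alternately inside and outside `M`. -/
def IsAltPath (E M : Finset (F × V)) (l : List (F ⊕ V)) : Prop :=
  l ≠ [] ∧ l.Nodup ∧ l.Chain' (sumAdj E) ∧
    (l.zip l.tail).Chain' fun e e' => pairInM M e ↔ ¬ pairInM M e'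

/-- `v ∈ V` is not an endpoint of any edge of `M`. -/
def VUnmatched (M : Finset (F × V)) (v : V) : Prop := ∀ f, (f, v) ∉ M

/-- `f ∈ F` is not an endpoint of any edge of `M`. -/
def FUnmatched (M : Finset (F × V)) (f : F) : Prop := ∀ v, (f, v) ∉ M

/-- The incomplete set `T_I`: all vertices reachable from some `M`-unmatched
vertex of `V` by a (possibly trivial) `M`-alternating path. -/
def incompleteSet (E M : Finset (F × V)) : Set (F ⊕ V) :=
  {x | ∃ v : V, VUnmatched M v ∧ ∃ l : List (F ⊕ V),
    IsAltPath E M l ∧ l.head? = some (Sum.inr v) ∧ l.getLast? = some x}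

/-- The overcomplete set `T_O`: all vertices reachable from some `M`-unmatched
vertex of `F` by a (possibly trivial) `M`-alternating path. -/
def overcompleteSet (E M : Finset (F × V)) : Set (F ⊕ V) :=
  {x | ∃ f : F, FUnmatched M f ∧ ∃ l : List (F ⊕ V),
    IsAltPath E M l ∧ l.head? = some (Sum.inl f) ∧ l.getLast? = some x}

/-- The complete set `T_C = (V ∪ F) \ (T_I ∪ T_O)`. -/
def completeSet (E M : Finset (F × V)) : Set (F ⊕ V) :=
  Set.univ \ (incompleteSet E M ∪ overcompleteSet E M)

section MyHelpers

variable {α : Type*}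

open List

private lemma zipTail_concat : ∀ (l : List α) (a x : α),
    ((l ++ [a, x]).zip (l ++ [a, x]).tail) = ((l ++ [a]).zip (l ++ [a]).tail) ++ [(a, x)]
  | [], a, x => rfl
  | [c], a, x => rfl
  | c :: d :: t, a, x => by
    have ih := zipTail_concat (d :: t) a x
    simp only [List.cons_append, List.zip_cons_cons, List.tail_cons] at ih ⊢
    rw [ih]

private lemma zipTail_prefix : ∀ (p s : List α), (p.zip p.tail) <+: ((p ++ s).zip (p ++ s).tail)
  | [], s => by simp
  | [a], s => by simp
  | a :: b :: t, s => by
    have ih := zipTail_prefix (b :: t) s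
    simp only [List.cons_append, List.zip_cons_cons, List.tail_cons] at ih ⊢
    exact List.cons_prefix_cons.mpr ⟨rfl, ih⟩

private lemma chain'_pred {r : α → α → Prop} :
    ∀ (l : List α) (x : α), l.Chain' r → x ∈ l →
      l.head? = some x ∨ ∃ b p q, r b x ∧ l = p ++ b :: x :: q := by
  intro l
  induction l with
  | nil => intro x _ hx; simp at hx
  | cons a t ih =>
    intro x hc hx
    rcases eq_or_ne x a with rfl | hne
    · exact Or.inl rfl
    · have hxt : x ∈ t := by
        rcases List.mem_cons.mp hx with h | h
        · exact absurd h hne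
        · exact h
      match t, hxt, hc with
      | c :: t', hxt, hc =>
        simp only [Chain', isChain_cons_cons] at hc
        rcases ih x hc.2 hxt with h | ⟨b, p, q, hr, heq⟩
        · obtain rfl : c = x := by simpa using h
          exact Or.inr ⟨a, [], t', hc.1, rfl⟩
        · exact Or.inr ⟨b, a :: p, q, hr, by rw [heq]; rfl⟩

private lemma last_unique {l p q : List α} {x : α} (hn : l.Nodup) (hl : l.getLast? = some x)
    (he : l = p ++ x :: q) : q = [] := by
  rcases q.eq_nil_or_concat with rfl | ⟨q', y, rfl⟩
  · rfl
  · exfalso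
    rw [List.concat_eq_append] at he
    have h2 : l.getLast? = some y := by
      rw [he, show p ++ x :: (q' ++ [y]) = (p ++ x :: q') ++ [y] by simp,
        List.getLast?_concat]
    rw [hl] at h2
    obtain rfl : x = y := by simpa using h2
    have hnd : (x :: (q' ++ [x])).Nodup := List.Nodup.of_append_right (he ▸ hn)
    simp [List.nodup_cons] at hnd

end MyHelpers

open List

private lemma altPath_prefix {E M : Finset (F × V)} {p s : List (F ⊕ V)}
    (h : IsAltPath E M (p ++ s)) (hp : p ≠ []) : IsAltPath E M p :=
  ⟨hp, h.2.1.of_append_left, h.2.2.1.prefix (prefix_append p s),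
    h.2.2.2.prefix (zipTail_prefix p s)⟩

private lemma chain_goodP (E M : Finset (F × V)) (P : (F ⊕ V) → Prop)
    (hP : ∀ a b, sumAdj E a b → (P b ↔ ¬ P a)) :
    ∀ (l : List (F ⊕ V)) (a b : F ⊕ V),
      (a :: b :: l).Chain' (sumAdj E) →
      ((a :: b :: l).zip (b :: l)).Chain' (fun e e' => pairInM M e ↔ ¬ pairInM M e') →
      (pairInM M (a, b) ↔ P a) →
      (a :: b :: l).Chain' (fun x y => sumAdj E x y ∧ (pairInM M (x, y) ↔ P x)) := by
  intro l
  induction l with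
  | nil =>
    intro a b hadj _ hfirst
    exact isChain_pair.mpr ⟨isChain_pair.mp hadj, hfirst⟩
  | cons c t ih =>
    intro a b hadj halt hfirst
    replace hadj := isChain_cons_cons.mp hadj
    simp only [zip_cons_cons] at halt
    replace halt := isChain_cons_cons.mp halt
    have hsecond : pairInM M (b, c) ↔ P b := by
      have h1 := halt.1
      have h2 := hP a b hadj.1
      tauto
    refine isChain_cons_cons.mpr ⟨⟨hadj.1, hfirst⟩, ?_⟩
    exact ih b c hadj.2 (by simpa [Chain'] using halt.2) hsecond

private lemma hP_left (E : Finset (F × V)) :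
    ∀ a b : F ⊕ V, sumAdj E a b → ((b.isLeft = true) ↔ ¬ (a.isLeft = true)) := by
  intro a b h
  cases a <;> cases b <;> simp [sumAdj] at h ⊢

private lemma hP_right (E : Finset (F × V)) :
    ∀ a b : F ⊕ V, sumAdj E a b → ((b.isRight = true) ↔ ¬ (a.isRight = true)) := by
  intro a b h
  cases a <;> cases b <;> simp [sumAdj] at h ⊢

private lemma incomplete_pair (E M : Finset (F × V)) (hm : IsMatching E M) (f : F) (v : V)
    (hfv : (f, v) ∈ M) :
    (Sum.inl f ∈ incompleteSet E M → Sum.inr v ∈ incompleteSet E M) ∧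
    (Sum.inr v ∈ incompleteSet E M → Sum.inl f ∈ incompleteSet E M) := by
  constructor
  · rintro ⟨v₀, hun, l, hpath, hhead, hlast⟩
    obtain ⟨hne, hnd, hadj, halt⟩ := hpath
    rcases l with _ | ⟨a, _ | ⟨b, t⟩⟩
    · exact absurd rfl hne
    · obtain rfl : a = Sum.inr v₀ := by simpa using hhead
      simp at hlast
    · obtain rfl : a = Sum.inr v₀ := by simpa using hhead
      obtain ⟨f₁, rfl⟩ : ∃ f₁, b = Sum.inl f₁ := by
        cases b with
        | inl f₁ => exact ⟨f₁, rfl⟩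
        | inr v₁ => exact absurd (isChain_cons_cons.mp hadj).1 (by simp [sumAdj])
      set l : List (F ⊕ V) := Sum.inr v₀ :: Sum.inl f₁ :: t with hl
      have hfirst : pairInM M (Sum.inr v₀, Sum.inl f₁) ↔
          (Sum.inr v₀ : F ⊕ V).isLeft = true := by
        simp [pairInM, hun f₁]
      have hg := chain_goodP E M (fun x => x.isLeft = true) (hP_left E) t _ _ hadj
        (by simpa [hl] using halt) hfirst
      have hfmem : (Sum.inl f : F ⊕ V) ∈ l := mem_of_getLast? hlast
      rcases chain'_pred l _ hg hfmem with hh | ⟨c, p, q, ⟨hcadj, hciff⟩, heq⟩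
      · simp [hl] at hh
      · obtain ⟨v'', rfl⟩ : ∃ v'', c = Sum.inr v'' := by
          cases c with
          | inl f'' => exact absurd hcadj (by simp [sumAdj])
          | inr v'' => exact ⟨v'', rfl⟩
        have hnotM : (f, v'') ∉ M := by
          simp only [pairInM, Sum.isLeft] at hciff
          simpa using hciff
        have hq : q = [] := last_unique hnd hlast
          (show l = (p ++ [Sum.inr v'']) ++ Sum.inl f :: q by rw [heq]; simp)
        subst hq
        have hvnot : (Sum.inr v : F ⊕ V) ∉ l := by
          intro hvl
          rcases chain'_pred l _ hg hvl with hh | ⟨c', p', q', ⟨hcadj', hciff'⟩, heq'⟩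
          · obtain rfl : v₀ = v := by simpa [hl] using hh
            exact hun f hfv
          · obtain ⟨f'', rfl⟩ : ∃ f'', c' = Sum.inl f'' := by
              cases c' with
              | inr => exact absurd hcadj' (by simp [sumAdj])
              | inl f'' => exact ⟨f'', rfl⟩
            have hin : (f'', v) ∈ M := by
              simp only [pairInM, Sum.isLeft] at hciff'
              simpa using hciff'
            have hf : f'' = f :=
              congrArg Prod.fst (hm.2.2 (f'', v) hin (f, v) hfv rfl)
            rw [hf] at heq'
            have := last_unique hnd hlast heq'
            simp at this
        have he2 : l = (p ++ [Sum.inr v'']) ++ [Sum.inl f] := by rw [heq]; simp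
        have hE0 : l.zip l.tail
            = ((p ++ [Sum.inr v'']).zip (p ++ [Sum.inr v'']).tail)
              ++ [(Sum.inr v'', Sum.inl f)] := by
          rw [heq]; exact zipTail_concat p _ _
        have hE1 : ((l ++ [Sum.inr v]).zip (l ++ [Sum.inr v]).tail)
            = (l.zip l.tail) ++ [(Sum.inl f, Sum.inr v)] := by
          conv_lhs => rw [he2, show ((p ++ [Sum.inr v'']) ++ [Sum.inl f]) ++ [Sum.inr v]
            = (p ++ [Sum.inr v'']) ++ [Sum.inl f, Sum.inr v] by simp]
          rw [zipTail_concat, he2]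
        refine ⟨v₀, hun, l ++ [Sum.inr v], ⟨by simp, ?_, ?_, ?_⟩, ?_, getLast?_concat⟩
        · refine hnd.append (nodup_singleton _) ?_
          intro x hx hx'
          simp only [mem_singleton] at hx'
          subst hx'
          exact hvnot hx
        · refine isChain_append.mpr ⟨hadj, isChain_singleton _, ?_⟩
          intro x hx y hy
          rw [hlast] at hx
          simp only [Option.mem_def, Option.some_inj] at hx
          simp only [head?_cons, Option.mem_def, Option.some_inj] at hy
          subst hx; subst hy
          exact (hm.1 hfv : (f, v) ∈ E)
        · rw [hE1]
          refine isChain_append.mpr ⟨halt, isChain_singleton _, ?_⟩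
          intro x hx y hy
          rw [hE0, getLast?_concat] at hx
          simp only [Option.mem_def, Option.some_inj] at hx
          simp only [head?_cons, Option.mem_def, Option.some_inj] at hy
          subst hx; subst hy
          simp [pairInM, hfv, hnotM]
        · rw [head?_append_of_ne_nil l (by simp [hl])]
          exact hhead
  · rintro ⟨v₀, hun, l, hpath, hhead, hlast⟩
    obtain ⟨hne, hnd, hadj, halt⟩ := hpath
    rcases l with _ | ⟨a, _ | ⟨b, t⟩⟩
    · exact absurd rfl hne
    · obtain rfl : a = Sum.inr v₀ := by simpa using hhead
      obtain rfl : v₀ = v := by simpa using hlast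
      exact absurd hfv (hun f)
    · obtain rfl : a = Sum.inr v₀ := by simpa using hhead
      obtain ⟨f₁, rfl⟩ : ∃ f₁, b = Sum.inl f₁ := by
        cases b with
        | inl f₁ => exact ⟨f₁, rfl⟩
        | inr v₁ => exact absurd (isChain_cons_cons.mp hadj).1 (by simp [sumAdj])
      set l : List (F ⊕ V) := Sum.inr v₀ :: Sum.inl f₁ :: t with hl
      have hfirst : pairInM M (Sum.inr v₀, Sum.inl f₁) ↔
          (Sum.inr v₀ : F ⊕ V).isLeft = true := by
        simp [pairInM, hun f₁]
      have hg := chain_goodP E M (fun x => x.isLeft = true) (hP_left E) t _ _ hadj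
        (by simpa [hl] using halt) hfirst
      have hvmem : (Sum.inr v : F ⊕ V) ∈ l := mem_of_getLast? hlast
      rcases chain'_pred l _ hg hvmem with hh | ⟨c, p, q, ⟨hcadj, hciff⟩, heq⟩
      · obtain rfl : v₀ = v := by simpa [hl] using hh
        exact absurd hfv (hun f)
      · obtain ⟨f', rfl⟩ : ∃ f', c = Sum.inl f' := by
          cases c with
          | inr => exact absurd hcadj (by simp [sumAdj])
          | inl f' => exact ⟨f', rfl⟩
        have hin : (f', v) ∈ M := by
          simp only [pairInM, Sum.isLeft] at hciff
          simpa using hciff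
        have hf : f' = f :=
          congrArg Prod.fst (hm.2.2 (f', v) hin (f, v) hfv rfl)
        rw [hf] at heq
        have hsplit : (p ++ [Sum.inl f]) ++ (Sum.inr v :: q) = l := by
          rw [heq]; simp
        have hpre : IsAltPath E M ((p ++ [Sum.inl f]) ++ (Sum.inr v :: q)) := by
          rw [hsplit]; exact ⟨hne, hnd, hadj, halt⟩
        refine ⟨v₀, hun, p ++ [Sum.inl f], altPath_prefix hpre (by simp), ?_,
          getLast?_concat⟩
        have hh2 := head?_append_of_ne_nil (p ++ [Sum.inl f])
          (l₂ := Sum.inr v :: q) (by simp)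
        rw [hsplit] at hh2
        rw [← hh2]
        exact hhead

private lemma overcomplete_pair (E M : Finset (F × V)) (hm : IsMatching E M) (f : F) (v : V)
    (hfv : (f, v) ∈ M) :
    (Sum.inl f ∈ overcompleteSet E M → Sum.inr v ∈ overcompleteSet E M) ∧
    (Sum.inr v ∈ overcompleteSet E M → Sum.inl f ∈ overcompleteSet E M) := by
  constructor
  · -- prefix case: path ends at inl f, cut just after its predecessor inr v
    rintro ⟨f₀, hun, l, hpath, hhead, hlast⟩
    obtain ⟨hne, hnd, hadj, halt⟩ := hpath
    rcases l with _ | ⟨a, _ | ⟨b, t⟩⟩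
    · exact absurd rfl hne
    · obtain rfl : a = Sum.inl f₀ := by simpa using hhead
      obtain rfl : f₀ = f := by simpa using hlast
      exact absurd hfv (hun v)
    · obtain rfl : a = Sum.inl f₀ := by simpa using hhead
      obtain ⟨v₁, rfl⟩ : ∃ v₁, b = Sum.inr v₁ := by
        cases b with
        | inr v₁ => exact ⟨v₁, rfl⟩
        | inl f₁ => exact absurd (isChain_cons_cons.mp hadj).1 (by simp [sumAdj])
      set l : List (F ⊕ V) := Sum.inl f₀ :: Sum.inr v₁ :: t with hl
      have hfirst : pairInM M (Sum.inl f₀, Sum.inr v₁) ↔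
          (Sum.inl f₀ : F ⊕ V).isRight = true := by
        simp [pairInM, hun v₁]
      have hg := chain_goodP E M (fun x => x.isRight = true) (hP_right E) t _ _ hadj
        (by simpa [hl] using halt) hfirst
      have hfmem : (Sum.inl f : F ⊕ V) ∈ l := mem_of_getLast? hlast
      rcases chain'_pred l _ hg hfmem with hh | ⟨c, p, q, ⟨hcadj, hciff⟩, heq⟩
      · obtain rfl : f₀ = f := by simpa [hl] using hh
        exact absurd hfv (hun v)
      · obtain ⟨v', rfl⟩ : ∃ v', c = Sum.inr v' := by
          cases c with
          | inl => exact absurd hcadj (by simp [sumAdj])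
          | inr v' => exact ⟨v', rfl⟩
        have hin : (f, v') ∈ M := by
          simp only [pairInM, Sum.isRight] at hciff
          simpa using hciff
        have hv : v' = v :=
          congrArg Prod.snd (hm.2.1 (f, v') hin (f, v) hfv rfl)
        rw [hv] at heq
        have hsplit : (p ++ [Sum.inr v]) ++ (Sum.inl f :: q) = l := by
          rw [heq]; simp
        have hpre : IsAltPath E M ((p ++ [Sum.inr v]) ++ (Sum.inl f :: q)) := by
          rw [hsplit]; exact ⟨hne, hnd, hadj, halt⟩
        refine ⟨f₀, hun, p ++ [Sum.inr v], altPath_prefix hpre (by simp), ?_,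
          getLast?_concat⟩
        have hh2 := head?_append_of_ne_nil (p ++ [Sum.inr v])
          (l₂ := Sum.inl f :: q) (by simp)
        rw [hsplit] at hh2
        rw [← hh2]
        exact hhead
  · -- append case: path ends at inr v, append inl f
    rintro ⟨f₀, hun, l, hpath, hhead, hlast⟩
    obtain ⟨hne, hnd, hadj, halt⟩ := hpath
    rcases l with _ | ⟨a, _ | ⟨b, t⟩⟩
    · exact absurd rfl hne
    · obtain rfl : a = Sum.inl f₀ := by simpa using hhead
      simp at hlast
    · obtain rfl : a = Sum.inl f₀ := by simpa using hhead
      obtain ⟨v₁, rfl⟩ : ∃ v₁, b = Sum.inr v₁ := by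
        cases b with
        | inr v₁ => exact ⟨v₁, rfl⟩
        | inl f₁ => exact absurd (isChain_cons_cons.mp hadj).1 (by simp [sumAdj])
      set l : List (F ⊕ V) := Sum.inl f₀ :: Sum.inr v₁ :: t with hl
      have hfirst : pairInM M (Sum.inl f₀, Sum.inr v₁) ↔
          (Sum.inl f₀ : F ⊕ V).isRight = true := by
        simp [pairInM, hun v₁]
      have hg := chain_goodP E M (fun x => x.isRight = true) (hP_right E) t _ _ hadj
        (by simpa [hl] using halt) hfirst
      have hvmem : (Sum.inr v : F ⊕ V) ∈ l := mem_of_getLast? hlast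
      rcases chain'_pred l _ hg hvmem with hh | ⟨c, p, q, ⟨hcadj, hciff⟩, heq⟩
      · simp [hl] at hh
      · obtain ⟨f'', rfl⟩ : ∃ f'', c = Sum.inl f'' := by
          cases c with
          | inr v'' => exact absurd hcadj (by simp [sumAdj])
          | inl f'' => exact ⟨f'', rfl⟩
        have hnotM : (f'', v) ∉ M := by
          simp only [pairInM, Sum.isRight] at hciff
          simpa using hciff
        have hq : q = [] := last_unique hnd hlast
          (show l = (p ++ [Sum.inl f'']) ++ Sum.inr v :: q by rw [heq]; simp)
        subst hq
        have hfnot : (Sum.inl f : F ⊕ V) ∉ l := by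
          intro hfl
          rcases chain'_pred l _ hg hfl with hh | ⟨c', p', q', ⟨hcadj', hciff'⟩, heq'⟩
          · obtain rfl : f₀ = f := by simpa [hl] using hh
            exact hun v hfv
          · obtain ⟨v'', rfl⟩ : ∃ v'', c' = Sum.inr v'' := by
              cases c' with
              | inl => exact absurd hcadj' (by simp [sumAdj])
              | inr v'' => exact ⟨v'', rfl⟩
            have hin : (f, v'') ∈ M := by
              simp only [pairInM, Sum.isRight] at hciff'
              simpa using hciff'
            have hv : v'' = v :=
              congrArg Prod.snd (hm.2.1 (f, v'') hin (f, v) hfv rfl)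
            rw [hv] at heq'
            have := last_unique hnd hlast heq'
            simp at this
        have he2 : l = (p ++ [Sum.inl f'']) ++ [Sum.inr v] := by rw [heq]; simp
        have hE0 : l.zip l.tail
            = ((p ++ [Sum.inl f'']).zip (p ++ [Sum.inl f'']).tail)
              ++ [(Sum.inl f'', Sum.inr v)] := by
          rw [heq]; exact zipTail_concat p _ _
        have hE1 : ((l ++ [Sum.inl f]).zip (l ++ [Sum.inl f]).tail)
            = (l.zip l.tail) ++ [(Sum.inr v, Sum.inl f)] := by
          conv_lhs => rw [he2, show ((p ++ [Sum.inl f'']) ++ [Sum.inr v]) ++ [Sum.inl f]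
            = (p ++ [Sum.inl f'']) ++ [Sum.inr v, Sum.inl f] by simp]
          rw [zipTail_concat, he2]
        refine ⟨f₀, hun, l ++ [Sum.inl f], ⟨by simp, ?_, ?_, ?_⟩, ?_, getLast?_concat⟩
        · refine hnd.append (nodup_singleton _) ?_
          intro x hx hx'
          simp only [mem_singleton] at hx'
          subst hx'
          exact hfnot hx
        · refine isChain_append.mpr ⟨hadj, isChain_singleton _, ?_⟩
          intro x hx y hy
          rw [hlast] at hx
          simp only [Option.mem_def, Option.some_inj] at hx
          simp only [head?_cons, Option.mem_def, Option.some_inj] at hy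
          subst hx; subst hy
          exact (hm.1 hfv : (f, v) ∈ E)
        · rw [hE1]
          refine isChain_append.mpr ⟨halt, isChain_singleton _, ?_⟩
          intro x hx y hy
          rw [hE0, getLast?_concat] at hx
          simp only [Option.mem_def, Option.some_inj] at hx
          simp only [head?_cons, Option.mem_def, Option.some_inj] at hy
          subst hx; subst hy
          simp [pairInM, hfv, hnotM]
        · rw [head?_append_of_ne_nil l (by simp [hl])]
          exact hhead

/-- if a vertex of `T_I` is an endpoint of an edge of the maximum
matching `M`, then the other endpoint of that edge lies in `T_I` as well; and the
same holds for `T_O`. -/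
theorem matched_vertices_stay_in_part (E M : Finset (F × V))
    (hM : IsMaxMatching E M) :
    (∀ f v, (f, v) ∈ M →
      (Sum.inl f ∈ incompleteSet E M → Sum.inr v ∈ incompleteSet E M) ∧
      (Sum.inr v ∈ incompleteSet E M → Sum.inl f ∈ incompleteSet E M)) ∧
    (∀ f v, (f, v) ∈ M →
      (Sum.inl f ∈ overcompleteSet E M → Sum.inr v ∈ overcompleteSet E M) ∧
      (Sum.inr v ∈ overcompleteSet E M → Sum.inl f ∈ overcompleteSet E M)) := by
  exact ⟨fun f v hfv => incomplete_pair E M hM.1 f v hfv,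
    fun f v hfv => overcomplete_pair E M hM.1 f v hfv⟩
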